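/- Let σ be a permutation of {1,...,p} with gcd(p, q_1, q_2) = 1, 0 < q_1 < q_2 < p, such that every j satisfies σ(j) - j ≡ 0, q_1, or q_2 (mod p). Let r and s be the total numbers of q_1-steps and q_2-steps of σ, let l = (r q_1 + s q_2)/p, and let k = gcd(r, s, l). Then σ has exactly k non-trivial cycles, each containing exactly r/k q_1-steps and s/k q_2-steps, and sgn(σ) = (-1)^{r + s + k}. -/

import Mathlib

set_option linter.unusedSectionVars false

open Finset Equiv Equiv.Perm

namespace Stmt8Aux

lemma ivt_aux (f : ℤ → ℤ) (hstep : ∀ z, f (z+1) ≤ f z + 1)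
    (a : ℤ) (n : ℕ) (ha : f a < 0) (hb : 0 < f (a + n)) : ∃ z, f z = 0 := by
  induction n generalizing a with
  | zero => simp at hb; omega
  | succ n ih =>
    rcases lt_trichotomy (f (a+1)) 0 with h | h | h
    · exact ih (a+1) h (by rw [show a + 1 + (n:ℤ) = a + ((n:ℕ)+1 : ℕ) by push_cast; ring]; exact hb)
    · exact ⟨a+1, h⟩
    · have := hstep a; omega

lemma ivt (f : ℤ → ℤ) (hstep : ∀ z, f (z+1) ≤ f z + 1 ∧ f z ≤ f (z+1) + 1)
    (z₁ z₂ : ℤ) (h₁ : f z₁ < 0) (h₂ : 0 < f z₂) : ∃ z, f z = 0 := by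
  rcases le_total z₁ z₂ with h | h
  · obtain ⟨n, hn⟩ : ∃ n : ℕ, z₂ = z₁ + n := ⟨(z₂ - z₁).toNat, by omega⟩
    exact ivt_aux f (fun z => (hstep z).1) z₁ n h₁ (hn ▸ h₂)
  · obtain ⟨n, hn⟩ : ∃ n : ℕ, z₁ = z₂ + n := ⟨(z₁ - z₂).toNat, by omega⟩
    obtain ⟨z, hz⟩ := ivt_aux (fun z => - f z)
      (fun z => by show -f (z+1) ≤ -f z + 1; have := (hstep z).2; omega)
      z₂ n (by show -f z₂ < 0; omega) (by show 0 < -f (z₂ + n); rw [← hn]; omega)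
    exact ⟨z, by omega⟩

variable {p q₁ q₂ : ℕ}

/-- the step predicate, matching the problem statement syntactically -/
def Pq (σ : Equiv.Perm (Fin p)) (q : ℕ) (j : Fin p) : Prop :=
  ((σ j : ℕ) : ZMod p) - ((j : ℕ) : ZMod p) = (q : ZMod p)

instance (σ : Equiv.Perm (Fin p)) (q : ℕ) : DecidablePred (Pq σ q) := fun j => by
  unfold Pq; infer_instance

lemma cast_inj [NeZero p] {a b : Fin p} (h : ((a : ℕ) : ZMod p) = ((b : ℕ) : ZMod p)) :
    a = b := by
  have ha := ZMod.val_cast_of_lt a.isLt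
  have hb := ZMod.val_cast_of_lt b.isLt
  exact Fin.ext (by rw [← ha, ← hb, h])

lemma qcast_ne_zero [NeZero p] {q : ℕ} (h0 : 0 < q) (hq : q < p) : (q : ZMod p) ≠ 0 := by
  intro h
  have := (ZMod.natCast_eq_zero_iff q p).mp h
  have := Nat.le_of_dvd h0 this
  omega

lemma qcast_ne [NeZero p] {q q' : ℕ} (hq : q < p) (hq' : q' < p) (hne : q ≠ q') :
    (q : ZMod p) ≠ (q' : ZMod p) := by
  intro h
  have h1 := ZMod.val_cast_of_lt hq
  have h2 := ZMod.val_cast_of_lt hq'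
  rw [← h1, ← h2, h] at hne; exact hne rfl

section Cycle

variable (σ : Equiv.Perm (Fin p))

/-- number of `q`-steps on the support of `c` -/
def rc (c : Equiv.Perm (Fin p)) (q : ℕ) : ℕ := (c.support.filter (Pq σ q)).card

/-- number of `q`-steps among the first `m` steps of the walk of `c` from `x₀`. -/
def Acnt (c : Equiv.Perm (Fin p)) (q : ℕ) (x₀ : Fin p) (m : ℕ) : ℕ :=
  ((Finset.range m).filter fun i => Pq σ q ((c ^ i) x₀)).card

/-- ℤ-extension of `Acnt` by quasi-periodicity. -/
def Az (c : Equiv.Perm (Fin p)) (q : ℕ) (x₀ : Fin p) (z : ℤ) : ℤ :=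
  rc σ c q * (z / (c.support.card : ℤ)) + Acnt σ c q x₀ (z % (c.support.card : ℤ)).toNat

end Cycle

section CycleLemmas

variable [NeZero p] {σ c : Equiv.Perm (Fin p)} {x₀ : Fin p}
    (h₁ : 0 < q₁) (h₁₂ : q₁ < q₂) (h₂p : q₂ < p)
    (hσ : ∀ j : Fin p,
      (((σ j : ℕ) : ZMod p) - ((j : ℕ) : ZMod p) = 0) ∨
      (((σ j : ℕ) : ZMod p) - ((j : ℕ) : ZMod p) = (q₁ : ZMod p)) ∨
      (((σ j : ℕ) : ZMod p) - ((j : ℕ) : ZMod p) = (q₂ : ZMod p)))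
    (hc : c ∈ σ.cycleFactorsFinset) (hx₀ : x₀ ∈ c.support)

-- abbreviations used below (stated as lemmas)
lemma c_isCycle (hc : c ∈ σ.cycleFactorsFinset) : c.IsCycle :=
  (Equiv.Perm.mem_cycleFactorsFinset_iff.mp hc).1

lemma c_agree (hc : c ∈ σ.cycleFactorsFinset) {x : Fin p} (hx : x ∈ c.support) : c x = σ x :=
  (Equiv.Perm.mem_cycleFactorsFinset_iff.mp hc).2 x hx

lemma n_pos (hc : c ∈ σ.cycleFactorsFinset) : 2 ≤ c.support.card :=
  (c_isCycle hc).two_le_card_support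

lemma c_isCycleOn (hc : c ∈ σ.cycleFactorsFinset) : c.IsCycleOn (c.support : Set (Fin p)) := by
  have := (c_isCycle hc).isCycleOn
  rwa [Equiv.Perm.coe_support_eq_set_support]

lemma w_mem (hx₀ : x₀ ∈ c.support) (z : ℤ) : (c ^ z) x₀ ∈ c.support :=
  Equiv.Perm.zpow_apply_mem_support.mpr hx₀

lemma w_mem_nat (hx₀ : x₀ ∈ c.support) (m : ℕ) : (c ^ m) x₀ ∈ c.support :=
  Equiv.Perm.pow_apply_mem_support.mpr hx₀

lemma w_inj (hc : c ∈ σ.cycleFactorsFinset) (hx₀ : x₀ ∈ c.support) {a b : ℤ}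
    (h : (c ^ a) x₀ = (c ^ b) x₀) : (c.support.card : ℤ) ∣ b - a := by
  have := ((c_isCycleOn hc).zpow_apply_eq_zpow_apply hx₀).mp h
  exact Int.ModEq.dvd this

lemma w_inj_nat (hc : c ∈ σ.cycleFactorsFinset) (hx₀ : x₀ ∈ c.support) {a b : ℕ}
    (ha : a < c.support.card) (hb : b < c.support.card)
    (h : (c ^ a) x₀ = (c ^ b) x₀) : a = b := by
  have := ((c_isCycleOn hc).pow_apply_eq_pow_apply hx₀).mp h
  have h1 : a % c.support.card = a := Nat.mod_eq_of_lt ha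
  have h2 : b % c.support.card = b := Nat.mod_eq_of_lt hb
  rwa [Nat.ModEq, h1, h2] at this


lemma step_cases (h₁ : 0 < q₁) (h₂p : q₂ < p)
    (hσ : ∀ j : Fin p,
      (((σ j : ℕ) : ZMod p) - ((j : ℕ) : ZMod p) = 0) ∨
      (((σ j : ℕ) : ZMod p) - ((j : ℕ) : ZMod p) = (q₁ : ZMod p)) ∨
      (((σ j : ℕ) : ZMod p) - ((j : ℕ) : ZMod p) = (q₂ : ZMod p)))
    (hc : c ∈ σ.cycleFactorsFinset) {x : Fin p} (hx : x ∈ c.support) :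
    Pq σ q₁ x ∨ Pq σ q₂ x := by
  rcases hσ x with h | h | h
  · exfalso
    have hxσ : x ∈ σ.support := Equiv.Perm.mem_cycleFactorsFinset_support_le hc hx
    have : σ x = x := cast_inj (by have := sub_eq_zero.mp h; exact this)
    exact (Equiv.Perm.mem_support.mp hxσ) this
  · exact Or.inl h
  · exact Or.inr h

lemma Pq_not_both (h₁ : 0 < q₁) (h₁₂ : q₁ < q₂) (h₂p : q₂ < p) {x : Fin p}
    (ha : Pq σ q₁ x) (hb : Pq σ q₂ x) : False := by
  have : (q₁ : ZMod p) = (q₂ : ZMod p) := ha.symm.trans hb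
  exact qcast_ne (by omega) h₂p (by omega) this

lemma Pq_step {q : ℕ} {x : Fin p} (h : Pq σ q x) :
    ((σ x : ℕ) : ZMod p) = ((x : ℕ) : ZMod p) + (q : ZMod p) := by
  have := sub_eq_iff_eq_add.mp h
  rw [this]; ring

lemma Acnt_zero {c : Equiv.Perm (Fin p)} {q : ℕ} : Acnt σ c q x₀ 0 = 0 := by
  simp [Acnt]

lemma Acnt_succ {c : Equiv.Perm (Fin p)} {q : ℕ} (m : ℕ) :
    Acnt σ c q x₀ (m+1) = Acnt σ c q x₀ m + if Pq σ q ((c ^ m) x₀) then 1 else 0 := by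
  unfold Acnt
  rw [Finset.range_add_one, Finset.filter_insert]
  split
  · rw [Finset.card_insert_of_notMem (fun hmem => by
      have := Finset.mem_range.mp (Finset.mem_of_mem_filter m hmem); omega)]
  · omega

lemma Acnt_le {c : Equiv.Perm (Fin p)} {q : ℕ} (m : ℕ) : Acnt σ c q x₀ m ≤ m :=
  le_trans (Finset.card_filter_le _ _) (le_of_eq (Finset.card_range m))

lemma formula_nat (h₁ : 0 < q₁) (h₁₂ : q₁ < q₂) (h₂p : q₂ < p)
    (hσ : ∀ j : Fin p,
      (((σ j : ℕ) : ZMod p) - ((j : ℕ) : ZMod p) = 0) ∨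
      (((σ j : ℕ) : ZMod p) - ((j : ℕ) : ZMod p) = (q₁ : ZMod p)) ∨
      (((σ j : ℕ) : ZMod p) - ((j : ℕ) : ZMod p) = (q₂ : ZMod p)))
    (hc : c ∈ σ.cycleFactorsFinset) (hx₀ : x₀ ∈ c.support) (m : ℕ) :
    ((((c ^ m) x₀ : Fin p) : ℕ) : ZMod p) =
      ((x₀ : ℕ) : ZMod p) + (Acnt σ c q₁ x₀ m : ZMod p) * (q₁ : ZMod p)
        + ((m - Acnt σ c q₁ x₀ m : ℕ) : ZMod p) * (q₂ : ZMod p) := by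
  induction m with
  | zero => simp [Acnt_zero]
  | succ m ih =>
    set y := (c ^ m) x₀ with hy
    have hymem : y ∈ c.support := w_mem_nat hx₀ m
    have hstep : (c ^ (m+1)) x₀ = σ y := by
      rw [pow_succ', Equiv.Perm.mul_apply, ← hy]
      exact c_agree hc hymem
    have hAle : Acnt σ c q₁ x₀ m ≤ m := Acnt_le m
    rcases step_cases h₁ h₂p hσ hc hymem with hP | hP
    · have h1 : Acnt σ c q₁ x₀ (m+1) = Acnt σ c q₁ x₀ m + 1 := by
        rw [Acnt_succ, if_pos hP]
      rw [hstep, Pq_step hP, ih, h1]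
      have h2 : m + 1 - (Acnt σ c q₁ x₀ m + 1) = m - Acnt σ c q₁ x₀ m := by omega
      rw [h2]
      push_cast
      ring
    · have hnP : ¬ Pq σ q₁ y := fun h => Pq_not_both h₁ h₁₂ h₂p h hP
      have h1 : Acnt σ c q₁ x₀ (m+1) = Acnt σ c q₁ x₀ m := by
        rw [Acnt_succ, if_neg hnP]; ring
      rw [hstep, Pq_step hP, ih, h1]
      have h2 : m + 1 - Acnt σ c q₁ x₀ m = (m - Acnt σ c q₁ x₀ m) + 1 := by omega
      rw [h2]
      push_cast
      ring

lemma pow_card_eq_one (hc : c ∈ σ.cycleFactorsFinset) : c ^ (c.support.card) = 1 := by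
  have := (c_isCycle hc).orderOf
  rw [← this]
  exact pow_orderOf_eq_one c

lemma w_period_nat (hc : c ∈ σ.cycleFactorsFinset) (m : ℕ) :
    (c ^ (m + c.support.card)) x₀ = (c ^ m) x₀ := by
  rw [pow_add, Equiv.Perm.mul_apply, pow_card_eq_one hc]
  simp

lemma w_period_int (hc : c ∈ σ.cycleFactorsFinset) (z : ℤ) :
    (c ^ (z + (c.support.card : ℤ))) x₀ = (c ^ z) x₀ := by
  rw [zpow_add, Equiv.Perm.mul_apply, zpow_natCast, pow_card_eq_one hc]
  simp

lemma Acnt_add_period {q : ℕ} (hc : c ∈ σ.cycleFactorsFinset) (m : ℕ) :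
    Acnt σ c q x₀ (m + c.support.card) = Acnt σ c q x₀ m + Acnt σ c q x₀ c.support.card := by
  induction m with
  | zero => simp [Acnt_zero]
  | succ m ih =>
    have : m + 1 + c.support.card = (m + c.support.card) + 1 := by omega
    rw [this, Acnt_succ, ih, w_period_nat hc, Acnt_succ]
    ring

lemma Acnt_add_mul {q : ℕ} (hc : c ∈ σ.cycleFactorsFinset) (m t : ℕ) :
    Acnt σ c q x₀ (m + t * c.support.card)
      = Acnt σ c q x₀ m + t * Acnt σ c q x₀ c.support.card := by
  induction t with
  | zero => simp
  | succ t ih =>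
    have : m + (t+1) * c.support.card = (m + t * c.support.card) + c.support.card := by ring
    rw [this, Acnt_add_period hc, ih]
    ring

lemma Acnt_card (hc : c ∈ σ.cycleFactorsFinset) (hx₀ : x₀ ∈ c.support) (q : ℕ) :
    Acnt σ c q x₀ c.support.card = rc σ c q := by
  unfold Acnt rc
  apply Finset.card_bij (fun i _ => (c ^ i) x₀)
  · intro i hi
    rw [Finset.mem_filter] at hi ⊢
    exact ⟨w_mem_nat hx₀ i, hi.2⟩
  · intro i hi j hj h
    rw [Finset.mem_filter, Finset.mem_range] at hi hj
    exact w_inj_nat hc hx₀ hi.1 hj.1 h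
  · intro y hy
    rw [Finset.mem_filter] at hy
    -- surjectivity: the image of range n covers the support
    have himg : c.support ⊆ (Finset.range c.support.card).image (fun i => (c ^ i) x₀) := by
      apply Finset.eq_of_subset_of_card_le ?_ ?_ |>.superset
      · intro z hz
        rw [Finset.mem_image] at hz
        obtain ⟨i, _, rfl⟩ := hz
        exact w_mem_nat hx₀ i
      · rw [Finset.card_image_of_injOn (fun i hi j hj h =>
          w_inj_nat hc hx₀ (Finset.mem_range.mp hi) (Finset.mem_range.mp hj) h),
          Finset.card_range]
    obtain ⟨i, hi, hie⟩ := Finset.mem_image.mp (himg hy.1)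
    exact ⟨i, Finset.mem_filter.mpr ⟨hi, by rw [hie]; exact hy.2⟩, hie⟩

lemma rc_add_sc (h₁ : 0 < q₁) (h₁₂ : q₁ < q₂) (h₂p : q₂ < p)
    (hσ : ∀ j : Fin p,
      (((σ j : ℕ) : ZMod p) - ((j : ℕ) : ZMod p) = 0) ∨
      (((σ j : ℕ) : ZMod p) - ((j : ℕ) : ZMod p) = (q₁ : ZMod p)) ∨
      (((σ j : ℕ) : ZMod p) - ((j : ℕ) : ZMod p) = (q₂ : ZMod p)))
    (hc : c ∈ σ.cycleFactorsFinset) :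
    rc σ c q₁ + rc σ c q₂ = c.support.card := by
  unfold rc
  have hfc : Finset.filter (fun a => ¬ Pq σ q₁ a) c.support
      = Finset.filter (Pq σ q₂) c.support := by
    apply Finset.filter_congr
    intro x hx
    have := step_cases h₁ h₂p hσ hc hx
    have hnb := fun ha hb => Pq_not_both (σ := σ) h₁ h₁₂ h₂p (x := x) ha hb
    constructor
    · intro h; tauto
    · intro h; tauto
  rw [← Finset.card_filter_add_card_filter_not (p := Pq σ q₁) (s := c.support), hfc]


/-- sum of displacements around a cycle vanishes mod p -/
lemma cycle_rel (h₁ : 0 < q₁) (h₁₂ : q₁ < q₂) (h₂p : q₂ < p)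
    (hσ : ∀ j : Fin p,
      (((σ j : ℕ) : ZMod p) - ((j : ℕ) : ZMod p) = 0) ∨
      (((σ j : ℕ) : ZMod p) - ((j : ℕ) : ZMod p) = (q₁ : ZMod p)) ∨
      (((σ j : ℕ) : ZMod p) - ((j : ℕ) : ZMod p) = (q₂ : ZMod p)))
    (hc : c ∈ σ.cycleFactorsFinset) :
    (rc σ c q₁ : ZMod p) * (q₁ : ZMod p) + (rc σ c q₂ : ZMod p) * (q₂ : ZMod p) = 0 := by
  have hsum0 : ∑ x ∈ c.support, (((σ x : ℕ) : ZMod p) - ((x : ℕ) : ZMod p)) = 0 := by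
    rw [Finset.sum_sub_distrib]
    have : ∑ x ∈ c.support, ((σ x : ℕ) : ZMod p) = ∑ x ∈ c.support, ((x : ℕ) : ZMod p) := by
      apply Finset.sum_bij (fun x _ => c x)
      · intro x hx; exact Equiv.Perm.apply_mem_support.mpr hx
      · intro a _ b _ h; exact c.injective h
      · intro y hy
        refine ⟨c⁻¹ y, ?_, by simp⟩
        have : c⁻¹ y ∈ c⁻¹.support :=
          Equiv.Perm.apply_mem_support.mpr (by rwa [Equiv.Perm.support_inv])
        rwa [Equiv.Perm.support_inv] at this
      · intro x hx
        rw [c_agree hc hx]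
    rw [this, sub_self]
  have hsplit : ∑ x ∈ c.support, (((σ x : ℕ) : ZMod p) - ((x : ℕ) : ZMod p))
      = ∑ x ∈ c.support.filter (Pq σ q₁), (((σ x : ℕ) : ZMod p) - ((x : ℕ) : ZMod p))
        + ∑ x ∈ c.support.filter (fun a => ¬ Pq σ q₁ a),
            (((σ x : ℕ) : ZMod p) - ((x : ℕ) : ZMod p)) :=
    (Finset.sum_filter_add_sum_filter_not _ _ _).symm
  have h1 : ∑ x ∈ c.support.filter (Pq σ q₁), (((σ x : ℕ) : ZMod p) - ((x : ℕ) : ZMod p))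
      = (rc σ c q₁ : ZMod p) * (q₁ : ZMod p) := by
    have e := Finset.sum_congr rfl (fun x (hx : x ∈ c.support.filter (Pq σ q₁)) =>
      (Finset.mem_filter.mp hx).2)
    rw [e, Finset.sum_const, nsmul_eq_mul]
    rfl
  have hfc : Finset.filter (fun a => ¬ Pq σ q₁ a) c.support
      = Finset.filter (Pq σ q₂) c.support := by
    apply Finset.filter_congr
    intro x hx
    have := step_cases h₁ h₂p hσ hc hx
    have hnb := fun ha hb => Pq_not_both (σ := σ) h₁ h₁₂ h₂p (x := x) ha hb
    constructor
    · intro h; tauto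
    · intro h; tauto
  have h2 : ∑ x ∈ c.support.filter (fun a => ¬ Pq σ q₁ a),
        (((σ x : ℕ) : ZMod p) - ((x : ℕ) : ZMod p))
      = (rc σ c q₂ : ZMod p) * (q₂ : ZMod p) := by
    rw [hfc]
    have e := Finset.sum_congr rfl (fun x (hx : x ∈ c.support.filter (Pq σ q₂)) =>
      (Finset.mem_filter.mp hx).2)
    rw [e, Finset.sum_const, nsmul_eq_mul]
    rfl
  rw [hsplit, h1, h2] at hsum0
  exact hsum0

section AzLemmas

lemma Az_eq_nat {q : ℕ} (hc : c ∈ σ.cycleFactorsFinset) (hx₀ : x₀ ∈ c.support) (m : ℕ) :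
    Az σ c q x₀ (m : ℤ) = Acnt σ c q x₀ m := by
  unfold Az
  have hn : 0 < c.support.card := by have := n_pos hc; omega
  rw [show ((m:ℤ) / (c.support.card : ℤ)) = ((m / c.support.card : ℕ) : ℤ) by
        exact (Int.natCast_ediv m c.support.card).symm,
      show ((m:ℤ) % (c.support.card : ℤ)) = ((m % c.support.card : ℕ) : ℤ) by
        exact (Int.natCast_emod m c.support.card).symm,
      Int.toNat_natCast]
  have hdecomp : m = (m % c.support.card) + (m / c.support.card) * c.support.card := by
    rw [Nat.mod_add_div']
  conv_rhs => rw [hdecomp]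
  rw [Acnt_add_mul hc, Acnt_card hc hx₀]
  push_cast
  ring

lemma Az_add_card {q : ℕ} (hc : c ∈ σ.cycleFactorsFinset) (z : ℤ) :
    Az σ c q x₀ (z + (c.support.card : ℤ)) = Az σ c q x₀ z + rc σ c q := by
  unfold Az
  have hn : (0:ℤ) < (c.support.card : ℤ) := by have := n_pos hc; positivity
  rw [show z + (c.support.card:ℤ) = z + 1 * (c.support.card:ℤ) by ring,
    Int.add_mul_ediv_right _ _ (by omega : (c.support.card:ℤ) ≠ 0),
    Int.add_mul_emod_self_right]
  ring

lemma Az_add_mul_card {q : ℕ} (hc : c ∈ σ.cycleFactorsFinset) (z : ℤ) (t : ℤ) :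
    Az σ c q x₀ (z + t * (c.support.card : ℤ)) = Az σ c q x₀ z + t * rc σ c q := by
  induction t using Int.induction_on with
  | zero => simp
  | succ t ih =>
    have : z + ((t:ℤ)+1) * (c.support.card : ℤ)
        = (z + t * (c.support.card : ℤ)) + (c.support.card : ℤ) := by ring
    rw [this, Az_add_card hc, ih]; ring
  | pred t ih =>
    have key := Az_add_card (x₀ := x₀) (q := q) hc (z + (-(t:ℤ)-1) * (c.support.card : ℤ))
    have harg : z + (-(t:ℤ)-1) * (c.support.card : ℤ) + (c.support.card : ℤ)
        = z + -(t:ℤ) * (c.support.card : ℤ) := by ring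
    rw [harg, ih] at key
    have hr : (-(t:ℤ)-1) * (rc σ c q : ℤ) = -(t:ℤ) * (rc σ c q : ℤ) - (rc σ c q : ℤ) := by
      ring
    rw [hr]
    linarith [key]

lemma Az_step {q : ℕ} (hc : c ∈ σ.cycleFactorsFinset) (hx₀ : x₀ ∈ c.support) (z : ℤ) :
    Az σ c q x₀ (z+1) = Az σ c q x₀ z ∨ Az σ c q x₀ (z+1) = Az σ c q x₀ z + 1 := by
  have hn : 0 < c.support.card := by have := n_pos hc; omega
  set t : ℕ := z.natAbs with ht
  have hnn : 0 ≤ z + t * (c.support.card : ℤ) := by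
    have h1 : (t:ℤ) * 1 ≤ (t:ℤ) * (c.support.card : ℤ) :=
      mul_le_mul_of_nonneg_left (by omega) (by positivity)
    rw [mul_one] at h1
    have h2 : -z ≤ (t:ℤ) := by
      rw [ht, ← Int.abs_eq_natAbs]
      exact neg_le_abs z
    linarith
  set m : ℕ := (z + t * (c.support.card : ℤ)).toNat with hm
  have hmz : (m : ℤ) = z + t * (c.support.card : ℤ) := Int.toNat_of_nonneg hnn
  have e1 : Az σ c q x₀ (z + t * (c.support.card : ℤ)) = Az σ c q x₀ z + t * rc σ c q :=
    Az_add_mul_card hc z t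
  have e2 : Az σ c q x₀ ((z+1) + t * (c.support.card : ℤ)) = Az σ c q x₀ (z+1) + t * rc σ c q :=
    Az_add_mul_card hc (z+1) t
  have f1 : Az σ c q x₀ (z + t * (c.support.card : ℤ)) = Acnt σ c q x₀ m := by
    rw [← hmz, Az_eq_nat hc hx₀]
  have f2 : Az σ c q x₀ ((z+1) + t * (c.support.card : ℤ)) = Acnt σ c q x₀ (m+1) := by
    rw [show (z+1) + t * (c.support.card : ℤ) = ((m+1 : ℕ) : ℤ) by push_cast; linarith [hmz],
      Az_eq_nat hc hx₀]
  have hdiff : Az σ c q x₀ (z+1) - Az σ c q x₀ z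
      = (Acnt σ c q x₀ (m+1) : ℤ) - (Acnt σ c q x₀ m : ℤ) := by
    rw [← f1, ← f2, e1, e2]; ring
  have := Acnt_succ (σ := σ) (x₀ := x₀) (c := c) (q := q) m
  rcases ite_eq_or_eq (Pq σ q ((c ^ m) x₀)) 1 0 with h | h <;> rw [h] at this <;> omega


lemma formula_int (h₁ : 0 < q₁) (h₁₂ : q₁ < q₂) (h₂p : q₂ < p)
    (hσ : ∀ j : Fin p,
      (((σ j : ℕ) : ZMod p) - ((j : ℕ) : ZMod p) = 0) ∨
      (((σ j : ℕ) : ZMod p) - ((j : ℕ) : ZMod p) = (q₁ : ZMod p)) ∨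
      (((σ j : ℕ) : ZMod p) - ((j : ℕ) : ZMod p) = (q₂ : ZMod p)))
    (hc : c ∈ σ.cycleFactorsFinset) (hx₀ : x₀ ∈ c.support) (z : ℤ) :
    ((((c ^ z) x₀ : Fin p) : ℕ) : ZMod p) =
      ((x₀ : ℕ) : ZMod p) + ((Az σ c q₁ x₀ z : ℤ) : ZMod p) * (q₁ : ZMod p)
        + ((z - Az σ c q₁ x₀ z : ℤ) : ZMod p) * (q₂ : ZMod p) := by
  set n := c.support.card with hn
  have hn2 : 2 ≤ n := n_pos hc
  -- the statement as a predicate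
  set Q : ℤ → Prop := fun z => ((((c ^ z) x₀ : Fin p) : ℕ) : ZMod p) =
      ((x₀ : ℕ) : ZMod p) + ((Az σ c q₁ x₀ z : ℤ) : ZMod p) * (q₁ : ZMod p)
        + ((z - Az σ c q₁ x₀ z : ℤ) : ZMod p) * (q₂ : ZMod p) with hQ
  have key : ∀ w : ℤ, Q (w + (n:ℤ)) → Q w := by
    intro w h
    rw [hQ] at h ⊢
    simp only at h ⊢
    rw [w_period_int hc] at h
    rw [Az_add_card hc] at h
    have hrel := cycle_rel h₁ h₁₂ h₂p hσ hc
    have hsc : (rc σ c q₂ : ℤ) = (n : ℤ) - (rc σ c q₁ : ℤ) := by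
      have := rc_add_sc h₁ h₁₂ h₂p hσ hc
      omega
    rw [h]
    push_cast
    have : ((rc σ c q₂ : ℕ) : ZMod p) = ((n:ZMod p) - (rc σ c q₁ : ZMod p)) := by
      have := congrArg (fun t : ℤ => ((t : ZMod p))) hsc
      push_cast at this
      exact this
    rw [this] at hrel
    ring_nf
    ring_nf at hrel
    linear_combination hrel
  have base : ∀ m : ℕ, Q (m : ℤ) := by
    intro m
    rw [hQ]
    simp only
    rw [Az_eq_nat hc hx₀, zpow_natCast]
    have hAle : Acnt σ c q₁ x₀ m ≤ m := Acnt_le m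
    have := formula_nat h₁ h₁₂ h₂p hσ hc hx₀ m
    rw [this]
    have hcast : ((m - Acnt σ c q₁ x₀ m : ℕ) : ZMod p)
        = (((m : ℤ) - (Acnt σ c q₁ x₀ m : ℤ) : ℤ) : ZMod p) := by
      have : ((m - Acnt σ c q₁ x₀ m : ℕ) : ℤ) = (m : ℤ) - (Acnt σ c q₁ x₀ m : ℤ) := by
        omega
      rw [← this]
      push_cast
      ring
    rw [hcast]
    push_cast
    ring
  have down : ∀ (t : ℕ) (w : ℤ), Q (w + t * (n:ℤ)) → Q w := by
    intro t
    induction t with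
    | zero => intro w h; simpa using h
    | succ t ih =>
      intro w h
      apply key
      apply ih
      rw [show w + (n:ℤ) + t * (n:ℤ) = w + ((t:ℤ)+1) * (n:ℤ) by ring]
      exact_mod_cast h
  show Q z
  set t : ℕ := z.natAbs with ht
  have hnn : 0 ≤ z + t * (n : ℤ) := by
    have h1 : (t:ℤ) * 1 ≤ (t:ℤ) * (n : ℤ) :=
      mul_le_mul_of_nonneg_left (by omega) (by positivity)
    rw [mul_one] at h1
    have h2 : -z ≤ (t:ℤ) := by
      rw [ht, ← Int.abs_eq_natAbs]
      exact neg_le_abs z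
    linarith
  apply down t
  rw [show z + t * (n:ℤ) = (((z + t * (n:ℤ)).toNat : ℕ) : ℤ) by
    rw [Int.toNat_of_nonneg hnn]]
  exact base _


lemma collision {c' : Equiv.Perm (Fin p)} {x₀' : Fin p}
    (h₁ : 0 < q₁) (h₁₂ : q₁ < q₂) (h₂p : q₂ < p)
    (hσ : ∀ j : Fin p,
      (((σ j : ℕ) : ZMod p) - ((j : ℕ) : ZMod p) = 0) ∨
      (((σ j : ℕ) : ZMod p) - ((j : ℕ) : ZMod p) = (q₁ : ZMod p)) ∨
      (((σ j : ℕ) : ZMod p) - ((j : ℕ) : ZMod p) = (q₂ : ZMod p)))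
    (hc : c ∈ σ.cycleFactorsFinset) (hx₀ : x₀ ∈ c.support)
    (hc' : c' ∈ σ.cycleFactorsFinset) (hx₀' : x₀' ∈ c'.support)
    {z z' u v : ℤ}
    (hu : Az σ c q₁ x₀ z = Az σ c' q₁ x₀' z' + u)
    (hv : z - Az σ c q₁ x₀ z = (z' - Az σ c' q₁ x₀' z') + v)
    (huv : ((u : ZMod p)) * (q₁ : ZMod p) + ((v : ZMod p)) * (q₂ : ZMod p)
      = ((x₀' : ℕ) : ZMod p) - ((x₀ : ℕ) : ZMod p)) :
    (c ^ z) x₀ = (c' ^ z') x₀' := by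
  apply cast_inj
  rw [formula_int h₁ h₁₂ h₂p hσ hc hx₀ z, formula_int h₁ h₁₂ h₂p hσ hc' hx₀' z']
  have hu' := congrArg (fun t : ℤ => ((t : ZMod p))) hu
  have hv' := congrArg (fun t : ℤ => ((t : ZMod p))) hv
  push_cast at hu' hv'
  push_cast
  linear_combination (q₁ : ZMod p) * hu' + (q₂ : ZMod p) * hv' + huv

lemma claimB (h₁ : 0 < q₁) (h₁₂ : q₁ < q₂) (h₂p : q₂ < p)
    (hσ : ∀ j : Fin p,
      (((σ j : ℕ) : ZMod p) - ((j : ℕ) : ZMod p) = 0) ∨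
      (((σ j : ℕ) : ZMod p) - ((j : ℕ) : ZMod p) = (q₁ : ZMod p)) ∨
      (((σ j : ℕ) : ZMod p) - ((j : ℕ) : ZMod p) = (q₂ : ZMod p)))
    (hc : c ∈ σ.cycleFactorsFinset) (d κ₁ κ₂ : ℕ) (hd : 2 ≤ d)
    (hrd : rc σ c q₁ = d * κ₁) (hsd : rc σ c q₂ = d * κ₂)
    (hκ : (κ₁ : ZMod p) * (q₁ : ZMod p) + (κ₂ : ZMod p) * (q₂ : ZMod p) = 0) : False := by
  obtain ⟨x₀, hx₀⟩ := (c_isCycle hc).nonempty_support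
  have hn2 : 2 ≤ c.support.card := n_pos hc
  have hnd : c.support.card = d * (κ₁ + κ₂) := by
    rw [← rc_add_sc h₁ h₁₂ h₂p hσ hc, hrd, hsd]; ring
  have hκpos : 1 ≤ κ₁ + κ₂ := by
    rcases Nat.eq_zero_or_pos (κ₁ + κ₂) with h | h
    · rw [h, Nat.mul_zero] at hnd; omega
    · exact h
  have hTn : κ₁ + κ₂ < c.support.card := by
    have : 2 * (κ₁ + κ₂) ≤ d * (κ₁ + κ₂) := Nat.mul_le_mul_right _ hd
    omega
  set T : ℤ := (κ₁ : ℤ) + (κ₂ : ℤ) with hT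
  set D : ℤ → ℤ := fun z => Az σ c q₁ x₀ z - Az σ c q₁ x₀ (z - T) - κ₁ with hD
  have hDne : ∀ z, D z ≠ 0 := by
    intro z h0
    rw [hD] at h0
    simp only at h0
    have hu : Az σ c q₁ x₀ z = Az σ c q₁ x₀ (z - T) + (κ₁ : ℤ) := by omega
    have hv : z - Az σ c q₁ x₀ z = ((z - T) - Az σ c q₁ x₀ (z - T)) + (κ₂ : ℤ) := by omega
    have huv : (((κ₁:ℤ) : ZMod p)) * (q₁ : ZMod p) + (((κ₂:ℤ) : ZMod p)) * (q₂ : ZMod p)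
        = ((x₀ : ℕ) : ZMod p) - ((x₀ : ℕ) : ZMod p) := by
      push_cast
      rw [hκ, sub_self]
    have hcol := collision h₁ h₁₂ h₂p hσ hc hx₀ hc hx₀ hu hv huv
    have hdvd := w_inj hc hx₀ hcol
    rw [show (z - T) - z = -T by ring, dvd_neg] at hdvd
    have := Int.le_of_dvd (by omega) hdvd
    omega
  have hstep : ∀ z, D (z+1) ≤ D z + 1 ∧ D z ≤ D (z+1) + 1 := by
    intro z
    have h1 := Az_step (q := q₁) hc hx₀ z
    have h2 := Az_step (q := q₁) hc hx₀ (z - T)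
    rw [show z - T + 1 = (z + 1) - T by ring] at h2
    rw [hD]
    simp only
    omega
  have htel : ∀ (j : ℕ) (z : ℤ),
      Az σ c q₁ x₀ z - Az σ c q₁ x₀ (z - (j:ℤ) * T) - (j:ℤ) * (κ₁:ℤ)
        = ∑ i ∈ Finset.range j, D (z - (i:ℤ) * T) := by
    intro j
    induction j with
    | zero => intro z; simp
    | succ j ih =>
      intro z
      rw [Finset.sum_range_succ, ← ih z]
      rw [hD]
      simp only
      have harg : z - (j:ℤ) * T - T = z - ((j:ℕ)+1 : ℕ) * T := by push_cast; ring
      rw [harg]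
      have hc1 : (((j:ℕ)+1 : ℕ) : ℤ) * (κ₁:ℤ) = (j:ℤ) * (κ₁:ℤ) + (κ₁:ℤ) := by push_cast; ring
      rw [hc1]
      ring
  have hzero : ∀ z : ℤ, ∑ i ∈ Finset.range d, D (z - (i:ℤ) * T) = 0 := by
    intro z
    rw [← htel d z]
    have hdT : (d:ℤ) * T = (c.support.card : ℤ) := by
      rw [hT, hnd]; push_cast; ring
    have hdκ : (d:ℤ) * (κ₁:ℤ) = (rc σ c q₁ : ℤ) := by
      rw [hrd]; push_cast; ring
    rw [hdT, hdκ]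
    have := Az_add_card (x₀ := x₀) (q := q₁) hc (z - (c.support.card : ℤ))
    rw [show z - (c.support.card:ℤ) + (c.support.card:ℤ) = z by ring] at this
    omega
  by_cases hpos : ∀ z, 0 < D z
  · have : 0 < ∑ i ∈ Finset.range d, D ((0:ℤ) - (i:ℤ) * T) :=
      Finset.sum_pos (fun i _ => hpos _) (by simp; omega)
    rw [hzero 0] at this; omega
  push_neg at hpos
  obtain ⟨z₁, hz₁⟩ := hpos
  have hz₁' : D z₁ < 0 := lt_of_le_of_ne hz₁ (hDne z₁)
  by_cases hneg : ∀ z, D z < 0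
  · have : ∑ i ∈ Finset.range d, D ((0:ℤ) - (i:ℤ) * T) < 0 :=
      Finset.sum_neg (fun i _ => hneg _) (by simp; omega)
    rw [hzero 0] at this; omega
  push_neg at hneg
  obtain ⟨z₂, hz₂⟩ := hneg
  have hz₂' : 0 < D z₂ := lt_of_le_of_ne hz₂ (fun h => hDne z₂ h.symm)
  obtain ⟨z, hz⟩ := ivt D hstep z₁ z₂ hz₁' hz₂'
  exact hDne z hz


lemma exists_uv (hgcd : Nat.gcd p (Nat.gcd q₁ q₂) = 1) (γ : ZMod p) :
    ∃ u v : ℤ, ((u : ZMod p)) * (q₁ : ZMod p) + ((v : ZMod p)) * (q₂ : ZMod p) = γ := by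
  set G : ℕ := Nat.gcd q₁ q₂ with hG
  have hcop : Nat.Coprime G p := Nat.Coprime.symm (by rwa [Nat.Coprime])
  have hGu : IsUnit (G : ZMod p) := (ZMod.isUnit_iff_coprime G p).mpr hcop
  have hbez := Nat.gcd_eq_gcd_ab q₁ q₂
  have hbez' : ((G:ℕ) : ZMod p) = (q₁ : ZMod p) * ((Nat.gcdA q₁ q₂ : ℤ) : ZMod p)
      + (q₂ : ZMod p) * ((Nat.gcdB q₁ q₂ : ℤ) : ZMod p) := by
    have := congrArg (fun t : ℤ => ((t : ZMod p))) hbez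
    push_cast at this
    exact_mod_cast this
  obtain ⟨u, hu⟩ := ZMod.intCast_surjective
    (γ * ((hGu.unit⁻¹ : (ZMod p)ˣ) : ZMod p) * ((Nat.gcdA q₁ q₂ : ℤ) : ZMod p))
  obtain ⟨v, hv⟩ := ZMod.intCast_surjective
    (γ * ((hGu.unit⁻¹ : (ZMod p)ˣ) : ZMod p) * ((Nat.gcdB q₁ q₂ : ℤ) : ZMod p))
  refine ⟨u, v, ?_⟩
  rw [hu, hv]
  have hGinv : ((G:ℕ) : ZMod p) * ((hGu.unit⁻¹ : (ZMod p)ˣ) : ZMod p) = 1 :=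
    hGu.mul_val_inv
  linear_combination (-(γ * ((hGu.unit⁻¹ : (ZMod p)ˣ) : ZMod p))) * hbez' + γ * hGinv

lemma claimA_aux {c' : Equiv.Perm (Fin p)}
    (h₁ : 0 < q₁) (h₁₂ : q₁ < q₂) (h₂p : q₂ < p)
    (hgcd : Nat.gcd p (Nat.gcd q₁ q₂) = 1)
    (hσ : ∀ j : Fin p,
      (((σ j : ℕ) : ZMod p) - ((j : ℕ) : ZMod p) = 0) ∨
      (((σ j : ℕ) : ZMod p) - ((j : ℕ) : ZMod p) = (q₁ : ZMod p)) ∨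
      (((σ j : ℕ) : ZMod p) - ((j : ℕ) : ZMod p) = (q₂ : ZMod p)))
    (hc : c ∈ σ.cycleFactorsFinset) (hc' : c' ∈ σ.cycleFactorsFinset) (hne : c ≠ c')
    (hlt : rc σ c' q₁ * c.support.card < rc σ c q₁ * c'.support.card) : False := by
  obtain ⟨x₀, hx₀⟩ := (c_isCycle hc).nonempty_support
  obtain ⟨x₀', hx₀'⟩ := (c_isCycle hc').nonempty_support
  obtain ⟨u, v, huv⟩ := exists_uv hgcd (((x₀' : ℕ) : ZMod p) - ((x₀ : ℕ) : ZMod p))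
  have hdisj : Disjoint c.support c'.support :=
    Equiv.Perm.Disjoint.disjoint_support
      (σ.cycleFactorsFinset_pairwise_disjoint (Finset.mem_coe.mpr hc) (Finset.mem_coe.mpr hc')
        hne)
  set T : ℤ := u + v with hT
  set D : ℤ → ℤ := fun z => Az σ c q₁ x₀ z - Az σ c' q₁ x₀' (z - T) - u with hD
  have hDne : ∀ z, D z ≠ 0 := by
    intro z h0
    rw [hD] at h0
    simp only at h0
    have hu' : Az σ c q₁ x₀ z = Az σ c' q₁ x₀' (z - T) + u := by omega
    have hv' : z - Az σ c q₁ x₀ z = ((z - T) - Az σ c' q₁ x₀' (z - T)) + v := by omega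
    have hcol := collision h₁ h₁₂ h₂p hσ hc hx₀ hc' hx₀' hu' hv' huv
    have hmem1 : (c ^ z) x₀ ∈ c.support := w_mem hx₀ z
    have hmem2 : (c' ^ (z - T)) x₀' ∈ c'.support := w_mem hx₀' (z - T)
    rw [hcol] at hmem1
    exact Finset.disjoint_left.mp hdisj hmem1 hmem2
  have hstep : ∀ z, D (z+1) ≤ D z + 1 ∧ D z ≤ D (z+1) + 1 := by
    intro z
    have h1 := Az_step (q := q₁) hc hx₀ z
    have h2 := Az_step (q := q₁) hc' hx₀' (z - T)
    rw [show z - T + 1 = (z + 1) - T by ring] at h2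
    rw [hD]
    simp only
    omega
  set M : ℤ := (c'.support.card : ℤ) * (c.support.card : ℤ) with hM
  set Δ : ℤ := (rc σ c q₁ : ℤ) * (c'.support.card : ℤ)
      - (rc σ c' q₁ : ℤ) * (c.support.card : ℤ) with hΔ
  have hdrift : ∀ z, D (z + M) = D z + Δ := by
    intro z
    have e1 : Az σ c q₁ x₀ (z + M) = Az σ c q₁ x₀ z + (c'.support.card : ℤ) * rc σ c q₁ := by
      rw [hM]
      exact Az_add_mul_card hc z (c'.support.card : ℤ)
    have e2 : Az σ c' q₁ x₀' ((z + M) - T)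
        = Az σ c' q₁ x₀' (z - T) + (c.support.card : ℤ) * rc σ c' q₁ := by
      rw [show (z + M) - T = (z - T) + (c.support.card : ℤ) * (c'.support.card : ℤ) by
        rw [hM]; ring]
      exact Az_add_mul_card hc' (z - T) (c.support.card : ℤ)
    rw [hD]
    simp only
    rw [e1, e2, hΔ]
    ring
  have hiter : ∀ t : ℤ, D (t * M) = D 0 + t * Δ := by
    have gen : ∀ (t : ℤ) (z : ℤ), D (z + t * M) = D z + t * Δ := by
      intro t
      induction t using Int.induction_on with
      | zero => intro z; simp
      | succ t ih =>
        intro z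
        rw [show z + ((t:ℤ)+1) * M = (z + t * M) + M by ring, hdrift, ih]
        ring
      | pred t ih =>
        intro z
        have key := hdrift (z + (-(t:ℤ)-1) * M)
        rw [show z + (-(t:ℤ)-1) * M + M = z + -(t:ℤ) * M by ring, ih] at key
        have : (-(t:ℤ)-1) * Δ = -(t:ℤ) * Δ - Δ := by ring
        rw [this]
        linarith [key]
    intro t
    have := gen t 0
    rwa [zero_add] at this
  have hΔpos : 0 < Δ := by
    rw [hΔ]
    have := hlt
    push_cast
    omega
  set tP : ℤ := |D 0| + 1 with htP
  have hpos : 0 < D (tP * M) := by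
    rw [hiter]
    have h1 : tP * 1 ≤ tP * Δ := mul_le_mul_of_nonneg_left (by omega) (by positivity)
    rw [mul_one] at h1
    have := abs_nonneg (D 0)
    have := neg_abs_le (D 0)
    linarith
  have hneg : D ((-tP) * M) < 0 := by
    rw [hiter]
    have h1 : tP * 1 ≤ tP * Δ := mul_le_mul_of_nonneg_left (by omega) (by positivity)
    rw [mul_one] at h1
    have := abs_nonneg (D 0)
    have := le_abs_self (D 0)
    have hneg' : (-tP) * Δ = -(tP * Δ) := by ring
    rw [hneg']
    linarith
  obtain ⟨z, hz⟩ := ivt D hstep ((-tP) * M) (tP * M) hneg hpos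
  exact hDne z hz

lemma claimA {c' : Equiv.Perm (Fin p)}
    (h₁ : 0 < q₁) (h₁₂ : q₁ < q₂) (h₂p : q₂ < p)
    (hgcd : Nat.gcd p (Nat.gcd q₁ q₂) = 1)
    (hσ : ∀ j : Fin p,
      (((σ j : ℕ) : ZMod p) - ((j : ℕ) : ZMod p) = 0) ∨
      (((σ j : ℕ) : ZMod p) - ((j : ℕ) : ZMod p) = (q₁ : ZMod p)) ∨
      (((σ j : ℕ) : ZMod p) - ((j : ℕ) : ZMod p) = (q₂ : ZMod p)))
    (hc : c ∈ σ.cycleFactorsFinset) (hc' : c' ∈ σ.cycleFactorsFinset) (hne : c ≠ c') :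
    rc σ c q₁ * c'.support.card = rc σ c' q₁ * c.support.card := by
  rcases lt_trichotomy (rc σ c q₁ * c'.support.card) (rc σ c' q₁ * c.support.card) with h | h | h
  · exact absurd h (by
      have := claimA_aux h₁ h₁₂ h₂p hgcd hσ hc' hc hne.symm
      intro hlt
      exact this hlt)
  · exact h
  · exact absurd h (by
      have := claimA_aux h₁ h₁₂ h₂p hgcd hσ hc hc' hne
      intro hlt
      exact this hlt)


lemma cycles_eq {c' : Equiv.Perm (Fin p)}
    (h₁ : 0 < q₁) (h₁₂ : q₁ < q₂) (h₂p : q₂ < p)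
    (hgcd : Nat.gcd p (Nat.gcd q₁ q₂) = 1)
    (hσ : ∀ j : Fin p,
      (((σ j : ℕ) : ZMod p) - ((j : ℕ) : ZMod p) = 0) ∨
      (((σ j : ℕ) : ZMod p) - ((j : ℕ) : ZMod p) = (q₁ : ZMod p)) ∨
      (((σ j : ℕ) : ZMod p) - ((j : ℕ) : ZMod p) = (q₂ : ZMod p)))
    (hc : c ∈ σ.cycleFactorsFinset) (hc' : c' ∈ σ.cycleFactorsFinset) (hne : c ≠ c') :
    rc σ c q₁ = rc σ c' q₁ ∧ rc σ c q₂ = rc σ c' q₂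
      ∧ c.support.card = c'.support.card := by
  have h1 : rc σ c q₁ * c'.support.card = rc σ c' q₁ * c.support.card :=
    claimA h₁ h₁₂ h₂p hgcd hσ hc hc' hne
  have hrs : rc σ c q₁ + rc σ c q₂ = c.support.card := rc_add_sc h₁ h₁₂ h₂p hσ hc
  have hrs' : rc σ c' q₁ + rc σ c' q₂ = c'.support.card := rc_add_sc h₁ h₁₂ h₂p hσ hc'
  have hn2 : 2 ≤ c.support.card := n_pos hc
  have hn2' : 2 ≤ c'.support.card := n_pos hc'
  have h2 : rc σ c q₂ * c'.support.card = rc σ c' q₂ * c.support.card := by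
    have e1 : (rc σ c q₁ + rc σ c q₂) * c'.support.card
        = (rc σ c' q₁ + rc σ c' q₂) * c.support.card := by
      rw [hrs, hrs']; ring
    zify at e1 h1 ⊢
    nlinarith [e1, h1]
  -- gcd decomposition
  set n := c.support.card with hn
  set n' := c'.support.card with hn'
  set d : ℕ := Nat.gcd n n' with hd
  have hdpos : 0 < d := Nat.gcd_pos_of_pos_left _ (by omega)
  set a : ℕ := n / d with ha
  set a' : ℕ := n' / d with ha'
  have han : d * a = n := Nat.mul_div_cancel' (Nat.gcd_dvd_left n n')
  have han' : d * a' = n' := Nat.mul_div_cancel' (Nat.gcd_dvd_right n n')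
  have hapos : 0 < a := by
    rcases Nat.eq_zero_or_pos a with h | h
    · rw [h, Nat.mul_zero] at han; omega
    · exact h
  have hapos' : 0 < a' := by
    rcases Nat.eq_zero_or_pos a' with h | h
    · rw [h, Nat.mul_zero] at han'; omega
    · exact h
  have hcop : Nat.Coprime a a' := Nat.coprime_div_gcd_div_gcd hdpos
  have hra : rc σ c q₁ * a' = rc σ c' q₁ * a := by
    apply Nat.eq_of_mul_eq_mul_left hdpos
    calc d * (rc σ c q₁ * a') = rc σ c q₁ * (d * a') := by ring
    _ = rc σ c q₁ * n' := by rw [han']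
    _ = rc σ c' q₁ * n := h1
    _ = rc σ c' q₁ * (d * a) := by rw [han]
    _ = d * (rc σ c' q₁ * a) := by ring
  have hsa : rc σ c q₂ * a' = rc σ c' q₂ * a := by
    apply Nat.eq_of_mul_eq_mul_left hdpos
    calc d * (rc σ c q₂ * a') = rc σ c q₂ * (d * a') := by ring
    _ = rc σ c q₂ * n' := by rw [han']
    _ = rc σ c' q₂ * n := h2
    _ = rc σ c' q₂ * (d * a) := by rw [han]
    _ = d * (rc σ c' q₂ * a) := by ring
  have ha_r : a ∣ rc σ c q₁ := by
    apply hcop.dvd_of_dvd_mul_right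
    rw [hra]
    exact Dvd.intro_left _ rfl
  have ha_s : a ∣ rc σ c q₂ := by
    apply hcop.dvd_of_dvd_mul_right
    rw [hsa]
    exact Dvd.intro_left _ rfl
  set ρ : ℕ := rc σ c q₁ / a with hρ
  set τ : ℕ := rc σ c q₂ / a with hτ
  have hrρ : rc σ c q₁ = a * ρ := (Nat.mul_div_cancel' ha_r).symm
  have hsτ : rc σ c q₂ = a * τ := (Nat.mul_div_cancel' ha_s).symm
  have hr'ρ : rc σ c' q₁ = a' * ρ := by
    apply Nat.eq_of_mul_eq_mul_left hapos
    calc a * rc σ c' q₁ = rc σ c' q₁ * a := by ring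
    _ = rc σ c q₁ * a' := hra.symm
    _ = (a * ρ) * a' := by rw [hrρ]
    _ = a * (a' * ρ) := by ring
  have hs'τ : rc σ c' q₂ = a' * τ := by
    apply Nat.eq_of_mul_eq_mul_left hapos
    calc a * rc σ c' q₂ = rc σ c' q₂ * a := by ring
    _ = rc σ c q₂ * a' := hsa.symm
    _ = (a * τ) * a' := by rw [hsτ]
    _ = a * (a' * τ) := by ring
  -- the primitive relation
  have hθa : (a : ZMod p) * ((ρ : ZMod p) * (q₁ : ZMod p) + (τ : ZMod p) * (q₂ : ZMod p)) = 0 := by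
    have hrel := cycle_rel h₁ h₁₂ h₂p hσ hc
    rw [hrρ, hsτ] at hrel
    push_cast at hrel
    linear_combination hrel
  have hθa' : (a' : ZMod p) * ((ρ : ZMod p) * (q₁ : ZMod p) + (τ : ZMod p) * (q₂ : ZMod p)) = 0 := by
    have hrel := cycle_rel h₁ h₁₂ h₂p hσ hc'
    rw [hr'ρ, hs'τ] at hrel
    push_cast at hrel
    linear_combination hrel
  have hbez : IsCoprime (a : ℤ) (a' : ℤ) := by
    rw [Int.isCoprime_iff_gcd_eq_one, Int.gcd_natCast_natCast]
    exact hcop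
  obtain ⟨x, y, hxy⟩ := hbez
  have hθ : (ρ : ZMod p) * (q₁ : ZMod p) + (τ : ZMod p) * (q₂ : ZMod p) = 0 := by
    have hc1 := congrArg (fun t : ℤ => ((t : ZMod p))) hxy
    push_cast at hc1
    linear_combination ((x : ℤ) : ZMod p) * hθa + ((y : ℤ) : ZMod p) * hθa'
      - ((ρ : ZMod p) * (q₁ : ZMod p) + (τ : ZMod p) * (q₂ : ZMod p)) * hc1
  have ha1 : a = 1 := by
    by_contra hne1
    have : 2 ≤ a := by omega
    exact claimB h₁ h₁₂ h₂p hσ hc a ρ τ this hrρ hsτ hθ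
  have ha1' : a' = 1 := by
    by_contra hne1
    have : 2 ≤ a' := by omega
    exact claimB h₁ h₁₂ h₂p hσ hc' a' ρ τ this hr'ρ hs'τ hθ
  refine ⟨?_, ?_, ?_⟩
  · rw [hrρ, hr'ρ, ha1, ha1']
  · rw [hsτ, hs'τ, ha1, ha1']
  · rw [← han, ← han', ha1, ha1']

lemma cycle_dvd (h₁ : 0 < q₁) (h₁₂ : q₁ < q₂) (h₂p : q₂ < p)
    (hσ : ∀ j : Fin p,
      (((σ j : ℕ) : ZMod p) - ((j : ℕ) : ZMod p) = 0) ∨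
      (((σ j : ℕ) : ZMod p) - ((j : ℕ) : ZMod p) = (q₁ : ZMod p)) ∨
      (((σ j : ℕ) : ZMod p) - ((j : ℕ) : ZMod p) = (q₂ : ZMod p)))
    (hc : c ∈ σ.cycleFactorsFinset) :
    p ∣ rc σ c q₁ * q₁ + rc σ c q₂ * q₂ := by
  rw [← ZMod.natCast_eq_zero_iff]
  push_cast
  exact cycle_rel h₁ h₁₂ h₂p hσ hc

lemma cycle_primitive (h₁ : 0 < q₁) (h₁₂ : q₁ < q₂) (h₂p : q₂ < p)
    (hσ : ∀ j : Fin p,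
      (((σ j : ℕ) : ZMod p) - ((j : ℕ) : ZMod p) = 0) ∨
      (((σ j : ℕ) : ZMod p) - ((j : ℕ) : ZMod p) = (q₁ : ZMod p)) ∨
      (((σ j : ℕ) : ZMod p) - ((j : ℕ) : ZMod p) = (q₂ : ZMod p)))
    (hc : c ∈ σ.cycleFactorsFinset) (l₀ : ℕ)
    (hl₀ : rc σ c q₁ * q₁ + rc σ c q₂ * q₂ = l₀ * p) :
    Nat.gcd (rc σ c q₁) (Nat.gcd (rc σ c q₂) l₀) = 1 := by
  set e : ℕ := Nat.gcd (rc σ c q₁) (Nat.gcd (rc σ c q₂) l₀) with he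
  have hn2 : 2 ≤ c.support.card := n_pos hc
  have hrs : rc σ c q₁ + rc σ c q₂ = c.support.card := rc_add_sc h₁ h₁₂ h₂p hσ hc
  have her : e ∣ rc σ c q₁ := Nat.gcd_dvd_left _ _
  have hes : e ∣ rc σ c q₂ := (Nat.gcd_dvd_right _ _).trans (Nat.gcd_dvd_left _ _)
  have hel : e ∣ l₀ := (Nat.gcd_dvd_right _ _).trans (Nat.gcd_dvd_right _ _)
  have hepos : 0 < e := by
    rcases Nat.eq_zero_or_pos e with h | h
    · exfalso
      have h1 := Nat.eq_zero_of_gcd_eq_zero_left h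
      have h2 := Nat.eq_zero_of_gcd_eq_zero_left (Nat.eq_zero_of_gcd_eq_zero_right h)
      omega
    · exact h
  by_contra hne1
  have he2 : 2 ≤ e := by omega
  set κ₁ := rc σ c q₁ / e with hκ₁
  set κ₂ := rc σ c q₂ / e with hκ₂
  set lq := l₀ / e with hlq
  have hk1 : rc σ c q₁ = e * κ₁ := (Nat.mul_div_cancel' her).symm
  have hk2 : rc σ c q₂ = e * κ₂ := (Nat.mul_div_cancel' hes).symm
  have hk3 : l₀ = e * lq := (Nat.mul_div_cancel' hel).symm
  have hkey : κ₁ * q₁ + κ₂ * q₂ = lq * p := by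
    apply Nat.eq_of_mul_eq_mul_left hepos
    calc e * (κ₁ * q₁ + κ₂ * q₂) = (e * κ₁) * q₁ + (e * κ₂) * q₂ := by ring
    _ = rc σ c q₁ * q₁ + rc σ c q₂ * q₂ := by rw [hk1, hk2]
    _ = l₀ * p := hl₀
    _ = e * (lq * p) := by rw [hk3]; ring
  have hκ : (κ₁ : ZMod p) * (q₁ : ZMod p) + (κ₂ : ZMod p) * (q₂ : ZMod p) = 0 := by
    have := congrArg (fun t : ℕ => ((t : ZMod p))) hkey
    push_cast at this
    rw [ZMod.natCast_self, mul_zero] at this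
    exact this
  exact claimB h₁ h₁₂ h₂p hσ hc e κ₁ κ₂ he2 hk1 hk2 hκ

end AzLemmas

lemma filter_eq_Pq (q : ℕ) (S : Finset (Fin p)) :
    (S.filter fun j : Fin p =>
      ((σ j : ℕ) : ZMod p) - ((j : ℕ) : ZMod p) = (q : ZMod p)) = S.filter (Pq σ q) := by
  ext j
  simp only [Finset.mem_filter, Pq]

lemma global_card (h₁ : 0 < q₁) (h₁₂ : q₁ < q₂) (h₂p : q₂ < p) {q : ℕ}
    (hq0 : 0 < q) (hqp : q < p) :
    (Finset.univ.filter (Pq σ q)).card = ∑ c ∈ σ.cycleFactorsFinset, rc σ c q := by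
  have hset : Finset.univ.filter (Pq σ q)
      = σ.cycleFactorsFinset.biUnion (fun c => c.support.filter (Pq σ q)) := by
    ext j
    simp only [Finset.mem_filter, Finset.mem_univ, true_and, Finset.mem_biUnion]
    constructor
    · intro hPq
      have hjs : j ∈ σ.support := by
        rw [Equiv.Perm.mem_support]
        intro hfix
        rw [Pq, hfix, sub_self] at hPq
        exact qcast_ne_zero hq0 hqp hPq.symm
      exact ⟨σ.cycleOf j, Equiv.Perm.cycleOf_mem_cycleFactorsFinset_iff.mpr hjs,
        Equiv.Perm.mem_support_cycleOf_iff.mpr ⟨Equiv.Perm.SameCycle.refl _ _, hjs⟩, hPq⟩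
    · rintro ⟨c, _, _, hPq⟩
      exact hPq
  rw [hset, Finset.card_biUnion]
  · rfl
  · intro c hcm c' hcm' hne
    have hdisj : Disjoint c.support c'.support :=
      Equiv.Perm.Disjoint.disjoint_support
        (σ.cycleFactorsFinset_pairwise_disjoint (Finset.mem_coe.mpr hcm)
          (Finset.mem_coe.mpr hcm') hne)
    exact Finset.disjoint_filter_filter hdisj

end CycleLemmas

theorem main_result (p q₁ q₂ : ℕ) (h₁ : 0 < q₁) (h₁₂ : q₁ < q₂) (h₂p : q₂ < p)
    (hgcd : Nat.gcd p (Nat.gcd q₁ q₂) = 1)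
    (σ : Equiv.Perm (Fin p))
    (hσ : ∀ j : Fin p,
      (((σ j : ℕ) : ZMod p) - ((j : ℕ) : ZMod p) = 0) ∨
      (((σ j : ℕ) : ZMod p) - ((j : ℕ) : ZMod p) = (q₁ : ZMod p)) ∨
      (((σ j : ℕ) : ZMod p) - ((j : ℕ) : ZMod p) = (q₂ : ZMod p)))
    (r s l k : ℕ)
    (hr : r = (Finset.univ.filter fun j : Fin p =>
        ((σ j : ℕ) : ZMod p) - ((j : ℕ) : ZMod p) = (q₁ : ZMod p)).card)
    (hs : s = (Finset.univ.filter fun j : Fin p =>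
        ((σ j : ℕ) : ZMod p) - ((j : ℕ) : ZMod p) = (q₂ : ZMod p)).card)
    (hl : r * q₁ + s * q₂ = l * p)
    (hk : k = Nat.gcd r (Nat.gcd s l)) :
    σ.cycleFactorsFinset.card = k ∧
    (∀ c ∈ σ.cycleFactorsFinset,
      (c.support.filter fun j : Fin p =>
        ((σ j : ℕ) : ZMod p) - ((j : ℕ) : ZMod p) = (q₁ : ZMod p)).card = r / k ∧
      (c.support.filter fun j : Fin p =>
        ((σ j : ℕ) : ZMod p) - ((j : ℕ) : ZMod p) = (q₂ : ZMod p)).card = s / k) ∧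
    Equiv.Perm.sign σ = (-1 : ℤˣ) ^ (r + s + k) := by
  haveI : NeZero p := ⟨by omega⟩
  rw [filter_eq_Pq] at hr hs
  by_cases hemp : σ.cycleFactorsFinset = ∅
  · -- σ is the identity
    have hσ1 : σ = 1 := Equiv.Perm.cycleFactorsFinset_eq_empty_iff.mp hemp
    have hfix : ∀ j : Fin p, σ j = j := fun j => by rw [hσ1]; rfl
    have hr0 : r = 0 := by
      rw [hr, Finset.card_eq_zero, Finset.filter_eq_empty_iff]
      intro j _
      rw [Pq, hfix j, sub_self]
      exact fun h => qcast_ne_zero h₁ (by omega) h.symm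
    have hs0 : s = 0 := by
      rw [hs, Finset.card_eq_zero, Finset.filter_eq_empty_iff]
      intro j _
      rw [Pq, hfix j, sub_self]
      exact fun h => qcast_ne_zero (by omega) h₂p h.symm
    have hl0 : l = 0 := by
      rw [hr0, hs0] at hl
      simp only [Nat.zero_mul, Nat.add_zero] at hl
      rcases Nat.mul_eq_zero.mp hl.symm with h | h
      · exact h
      · omega
    have hk0 : k = 0 := by rw [hk, hr0, hs0, hl0]; simp
    refine ⟨by rw [hemp, hk0]; rfl, fun c hcm => absurd hcm (by rw [hemp]; exact Finset.notMem_empty c), ?_⟩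
    rw [hσ1, hr0, hs0, hk0]
    simp
  · -- main case
    obtain ⟨c₀, hc₀⟩ := Finset.nonempty_of_ne_empty hemp
    set m : ℕ := σ.cycleFactorsFinset.card with hm
    have hm1 : 1 ≤ m := Finset.card_pos.mpr ⟨c₀, hc₀⟩
    set r₀ : ℕ := rc σ c₀ q₁ with hr₀
    set s₀ : ℕ := rc σ c₀ q₂ with hs₀
    have hall : ∀ c ∈ σ.cycleFactorsFinset,
        rc σ c q₁ = r₀ ∧ rc σ c q₂ = s₀ := by
      intro c hcm
      by_cases hce : c = c₀
      · subst hce; exact ⟨rfl, rfl⟩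
      · obtain ⟨e1, e2, _⟩ := cycles_eq h₁ h₁₂ h₂p hgcd hσ hcm hc₀ hce
        exact ⟨e1, e2⟩
    have hrsum : r = m * r₀ := by
      rw [hr, global_card h₁ h₁₂ h₂p h₁ (by omega),
        Finset.sum_congr rfl (fun c hcm => (hall c hcm).1), Finset.sum_const, smul_eq_mul]
    have hssum : s = m * s₀ := by
      rw [hs, global_card h₁ h₁₂ h₂p (by omega : 0 < q₂) h₂p,
        Finset.sum_congr rfl (fun c hcm => (hall c hcm).2), Finset.sum_const, smul_eq_mul]
    have hdvd : p ∣ r₀ * q₁ + s₀ * q₂ := cycle_dvd h₁ h₁₂ h₂p hσ hc₀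
    set l₀ : ℕ := (r₀ * q₁ + s₀ * q₂) / p with hl₀def
    have hl₀ : r₀ * q₁ + s₀ * q₂ = l₀ * p := by
      rw [hl₀def, Nat.div_mul_cancel hdvd]
    have hleq : l = m * l₀ := by
      have h1 : l * p = (m * l₀) * p := by
        rw [← hl, hrsum, hssum]
        calc m * r₀ * q₁ + m * s₀ * q₂ = m * (r₀ * q₁ + s₀ * q₂) := by ring
        _ = m * (l₀ * p) := by rw [hl₀]
        _ = (m * l₀) * p := by ring
      exact Nat.eq_of_mul_eq_mul_right (by omega) h1
    have hprim : Nat.gcd r₀ (Nat.gcd s₀ l₀) = 1 :=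
      cycle_primitive h₁ h₁₂ h₂p hσ hc₀ l₀ hl₀
    have hkm : k = m := by
      rw [hk, hrsum, hssum, hleq, Nat.gcd_mul_left, Nat.gcd_mul_left, hprim, Nat.mul_one]
    refine ⟨hkm.symm, ?_, ?_⟩
    · intro c hcm
      rw [filter_eq_Pq, filter_eq_Pq]
      constructor
      · show rc σ c q₁ = r / k
        rw [(hall c hcm).1, hrsum, hkm, Nat.mul_div_cancel_left _ (by omega : 0 < m)]
      · show rc σ c q₂ = s / k
        rw [(hall c hcm).2, hssum, hkm, Nat.mul_div_cancel_left _ (by omega : 0 < m)]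
    · -- sign
      have hprod := Equiv.Perm.cycleFactorsFinset_noncommProd (f := σ)
      have hsign : Equiv.Perm.sign σ
          = ∏ c ∈ σ.cycleFactorsFinset, Equiv.Perm.sign c := by
        conv_lhs => rw [← hprod]
        rw [Finset.map_noncommProd, Finset.noncommProd_eq_prod]
        rfl
      have hsc : ∀ c ∈ σ.cycleFactorsFinset,
          Equiv.Perm.sign c = (-1 : ℤˣ) ^ (c.support.card + 1) := by
        intro c hcm
        rw [(c_isCycle hcm).sign, pow_succ, mul_neg_one]
      have hcard : ∀ c ∈ σ.cycleFactorsFinset, c.support.card = r₀ + s₀ := by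
        intro c hcm
        rw [← rc_add_sc h₁ h₁₂ h₂p hσ hcm, (hall c hcm).1, (hall c hcm).2]
      have hpc : ∏ c ∈ σ.cycleFactorsFinset, Equiv.Perm.sign c
          = ∏ _c ∈ σ.cycleFactorsFinset, (-1 : ℤˣ) ^ (r₀ + s₀ + 1) :=
        Finset.prod_congr rfl (fun c hcm => by rw [hsc c hcm, hcard c hcm])
      rw [hsign, hpc, Finset.prod_const, ← pow_mul, ← hm]
      congr 1
      rw [hrsum, hssum, hkm]
      ring


end Stmt8Aux




open Finset

theorem stmt_8 (p q₁ q₂ : ℕ) (h₁ : 0 < q₁) (h₁₂ : q₁ < q₂) (h₂p : q₂ < p)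
    (hgcd : Nat.gcd p (Nat.gcd q₁ q₂) = 1)
    (σ : Equiv.Perm (Fin p))
    (hσ : ∀ j : Fin p,
      (((σ j : ℕ) : ZMod p) - ((j : ℕ) : ZMod p) = 0) ∨
      (((σ j : ℕ) : ZMod p) - ((j : ℕ) : ZMod p) = (q₁ : ZMod p)) ∨
      (((σ j : ℕ) : ZMod p) - ((j : ℕ) : ZMod p) = (q₂ : ZMod p)))
    (r s l k : ℕ)
    (hr : r = (Finset.univ.filter fun j : Fin p =>
        ((σ j : ℕ) : ZMod p) - ((j : ℕ) : ZMod p) = (q₁ : ZMod p)).card)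
    (hs : s = (Finset.univ.filter fun j : Fin p =>
        ((σ j : ℕ) : ZMod p) - ((j : ℕ) : ZMod p) = (q₂ : ZMod p)).card)
    (hl : r * q₁ + s * q₂ = l * p)
    (hk : k = Nat.gcd r (Nat.gcd s l)) :
    σ.cycleFactorsFinset.card = k ∧
    (∀ c ∈ σ.cycleFactorsFinset,
      (c.support.filter fun j : Fin p =>
        ((σ j : ℕ) : ZMod p) - ((j : ℕ) : ZMod p) = (q₁ : ZMod p)).card = r / k ∧
      (c.support.filter fun j : Fin p =>
        ((σ j : ℕ) : ZMod p) - ((j : ℕ) : ZMod p) = (q₂ : ZMod p)).card = s / k) ∧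
    Equiv.Perm.sign σ = (-1 : ℤˣ) ^ (r + s + k) := by
  exact Stmt8Aux.main_result p q₁ q₂ h₁ h₁₂ h₂p hgcd σ hσ r s l k hr hs hl hk
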